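/- If f = Σ_α a_α z^α is holomorphic on the unit polydisc in ℂⁿ with |f| ≤ 1, then for every multi-index α ≠ 0, |a_α| ≤ 1 - |a_0|². -/

import Mathlib

open Complex Finset Metric FormalMultilinearSeries


lemma ofScalars_coeff' (c : ℕ → ℂ) (n : ℕ) : (ofScalars ℂ c).coeff n = c n := by
  show (ofScalars ℂ c) n 1 = c n
  rw [Pi.one_def, ofScalars_apply_eq]
  simp

lemma hasPS (c : ℕ → ℂ) (F : ℂ → ℂ)
    (h : ∀ w : ℂ, ‖w‖ < 1 → HasSum (fun m => c m * w ^ m) (F w)) :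
    HasFPowerSeriesOnBall F (ofScalars ℂ c) 0 1 := by
  constructor
  · apply ENNReal.le_of_forall_nnreal_lt
    intro r hr
    apply le_radius_of_summable_norm
    have hr1 : (r : ℝ) < 1 := by exact_mod_cast hr
    set r' : ℝ := (r + 1) / 2 with hr'
    have h0 : (0:ℝ) ≤ r := r.2
    have hrr' : (r : ℝ) ≤ r' := by rw [hr']; linarith
    have hr'1 : r' < 1 := by rw [hr']; linarith
    have hr'0 : (0:ℝ) ≤ r' := by rw [hr']; linarith
    have hs : Summable fun m => c m * (r' : ℂ) ^ m := by
      refine (h r' ?_).summable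
      simpa [Complex.norm_real, _root_.abs_of_nonneg hr'0] using hr'1
    have hs' : Summable fun m => ‖c m‖ * r' ^ m := by
      have := hs.norm
      simpa [norm_mul, norm_pow, Complex.norm_real, _root_.abs_of_nonneg hr'0] using this
    apply Summable.of_nonneg_of_le (fun m => by positivity) _ hs'
    intro m
    rw [ofScalars_norm]
    exact mul_le_mul_of_nonneg_left (pow_le_pow_left₀ h0 hrr' m) (norm_nonneg _)
  · exact one_pos
  · intro y hy
    have hy' : ‖y‖ < 1 := by
      have := mem_emetric_ball_zero_iff.mp hy
      rw [← ofReal_norm, ENNReal.ofReal_lt_one] at this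
      exact this
    have hs := h y hy'
    have : ∀ n, (ofScalars ℂ c) n (fun _ => y) = c n * y ^ n := by
      intro n; rw [ofScalars_apply_eq]; simp [smul_eq_mul]
    simp only [zero_add, this]
    exact hs



lemma mobius_ineq (a b : ℂ) (ha : ‖a‖ < 1) (hb : ‖b‖ ≤ 1) :
    ‖b - a‖ ≤ ‖1 - (starRingEnd ℂ) a * b‖ := by
  have h1 : Complex.normSq (1 - (starRingEnd ℂ) a * b) - Complex.normSq (b - a)
      = (1 - Complex.normSq a) * (1 - Complex.normSq b) := by
    simp only [Complex.normSq_apply, Complex.sub_re, Complex.sub_im, Complex.mul_re,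
      Complex.mul_im, Complex.one_re, Complex.one_im, Complex.conj_re, Complex.conj_im]
    ring
  have ha' : Complex.normSq a < 1 := by
    rw [Complex.normSq_eq_norm_sq]
    nlinarith [norm_nonneg a]
  have hb' : Complex.normSq b ≤ 1 := by
    rw [Complex.normSq_eq_norm_sq]
    nlinarith [norm_nonneg b]
  have h2 : Complex.normSq (b - a) ≤ Complex.normSq (1 - (starRingEnd ℂ) a * b) := by nlinarith
  rw [Complex.norm_def, Complex.norm_def]
  exact Real.sqrt_le_sqrt h2

lemma core (c : ℕ → ℂ) (F : ℂ → ℂ)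
    (h : ∀ w : ℂ, ‖w‖ < 1 → HasSum (fun m => c m * w ^ m) (F w))
    (hbd : ∀ w : ℂ, ‖w‖ < 1 → ‖F w‖ ≤ 1) :
    ‖c 1‖ ≤ 1 - ‖c 0‖ ^ 2 := by
  have hps := hasPS c F h
  have hball : ∀ w : ℂ, w ∈ ball (0:ℂ) 1 → ‖w‖ < 1 := by
    intro w hw; simpa [mem_ball, dist_eq_norm] using hw
  have hdiff : DifferentiableOn ℂ F (ball (0:ℂ) 1) := by
    have := hps.differentiableOn
    refine DifferentiableOn.mono this ?_
    intro w hw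
    exact mem_emetric_ball_zero_iff.mpr (by rw [← ofReal_norm, ENNReal.ofReal_lt_one]; exact hball w hw)
  have hF0 : F 0 = c 0 := by
    have h0 := h 0 (by norm_num)
    have h0' : HasSum (fun m => if m = 0 then c 0 else 0) (F 0) := by
      refine h0.congr_fun ?_
      intro m; cases m <;> simp
    have := hasSum_ite_eq 0 (c 0)
    exact h0'.unique this
  have hderiv : deriv F 0 = c 1 := by
    rw [hps.hasFPowerSeriesAt.deriv]
    simpa using ofScalars_apply_eq (c := c) (1:ℂ) 1
  have hc0 : ‖c 0‖ ≤ 1 := hF0 ▸ hbd 0 (by norm_num)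
  rcases lt_or_eq_of_le hc0 with hlt | heq
  · -- Möbius case
    set a := c 0 with ha
    have hden : ∀ w : ℂ, ‖w‖ < 1 → (1 - (starRingEnd ℂ) a * F w) ≠ 0 := by
      intro w hw hzero
      have : (1:ℂ) = (starRingEnd ℂ) a * F w := by linear_combination hzero
      have hn : (1:ℝ) = ‖(starRingEnd ℂ) a * F w‖ := by rw [← this]; simp
      rw [norm_mul] at hn
      have : ‖(starRingEnd ℂ) a‖ = ‖a‖ := by simp
      nlinarith [hbd w hw, norm_nonneg a, norm_nonneg (F w)]
    set ψ : ℂ → ℂ := fun w => (F w - a) / (1 - (starRingEnd ℂ) a * F w) with hψ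
    have hψdiff : DifferentiableOn ℂ ψ (ball (0:ℂ) 1) := by
      apply DifferentiableOn.div
      · exact hdiff.sub (differentiableOn_const a)
      · exact (differentiableOn_const (1:ℂ)).sub ((differentiableOn_const _).mul hdiff)
      · intro w hw; exact hden w (hball w hw)
    have hψ0 : ψ 0 = 0 := by
      simp [hψ, hF0]
    have hψle : ∀ w ∈ ball (0:ℂ) 1, ‖ψ w‖ ≤ 1 := by
      intro w hw
      have hw' := hball w hw
      rw [hψ, norm_div]
      rw [div_le_one (norm_pos_iff.mpr (hden w hw'))]
      exact mobius_ineq a (F w) hlt (hbd w hw')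
    -- derivative of ψ at 0
    have hFd : HasDerivAt F (c 1) 0 := by
      have := (hdiff.differentiableAt (isOpen_ball.mem_nhds (mem_ball_self one_pos))).hasDerivAt
      rwa [hderiv] at this
    have hd0 : (1 - (starRingEnd ℂ) a * F 0) ≠ 0 := hden 0 (by norm_num)
    have hnum : HasDerivAt (fun w => F w - a) (c 1) 0 := hFd.sub_const a
    have hden' : HasDerivAt (fun w => 1 - (starRingEnd ℂ) a * F w)
        (-((starRingEnd ℂ) a * c 1)) 0 := by
      have := (hFd.const_mul ((starRingEnd ℂ) a)).const_sub (1:ℂ)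
      simpa using this
    have hψd : HasDerivAt ψ
        ((c 1 * (1 - (starRingEnd ℂ) a * F 0) - (F 0 - a) * (-((starRingEnd ℂ) a * c 1)))
          / (1 - (starRingEnd ℂ) a * F 0) ^ 2) 0 := hnum.div hden' hd0
    have hone : (1 : ℂ) - (starRingEnd ℂ) a * a ≠ 0 := by
      rw [hF0] at hd0; exact hd0
    have hψd' : deriv ψ 0 = c 1 / (1 - (starRingEnd ℂ) a * a) := by
      rw [hψd.deriv, hF0]
      field_simp
      ring
    -- Schwarz estimate
    have hsch : ‖deriv ψ 0‖ ≤ 1 := by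
      apply le_of_forall_pos_le_add
      intro ε hε
      have hm : Set.MapsTo ψ (ball (0:ℂ) 1) (ball (ψ 0) (1 + ε)) := by
        intro w hw
        rw [hψ0, mem_ball, dist_eq_norm, sub_zero]
        exact lt_of_le_of_lt (hψle w hw) (by linarith)
      have := Complex.norm_deriv_le_div_of_mapsTo_ball hψdiff (hm.mono_right ball_subset_closedBall) one_pos
      linarith [this, (by norm_num : (1+ε)/1 = 1+ε)]
    rw [hψd'] at hsch
    have habs : ‖(1:ℂ) - (starRingEnd ℂ) a * a‖ = 1 - ‖a‖ ^ 2 := by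
      have : (starRingEnd ℂ) a * a = (Complex.normSq a : ℂ) := by
        rw [mul_comm, Complex.mul_conj]
      rw [this]
      have h1 : ((1:ℂ) - (Complex.normSq a : ℂ)) = ((1 - Complex.normSq a : ℝ) : ℂ) := by
        push_cast; ring
      rw [h1, Complex.norm_real, Real.norm_eq_abs]
      rw [_root_.abs_of_nonneg]
      · rw [Complex.normSq_eq_norm_sq]
      · nlinarith [Complex.normSq_eq_norm_sq a, hlt, norm_nonneg a]
    rw [norm_div, habs, div_le_one (by nlinarith [norm_nonneg a])] at hsch
    linarith
  · -- maximum modulus: F is constant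
    have hmax : IsMaxOn (norm ∘ F) (ball (0:ℂ) 1) 0 := by
      intro w hw
      simp only [Function.comp_apply, Set.mem_setOf_eq, hF0]
      rw [heq]
      exact hbd w (hball w hw)
    have hcon : Set.EqOn F (Function.const ℂ (F 0)) (ball (0:ℂ) 1) :=
      Complex.eqOn_of_isPreconnected_of_isMaxOn_norm (convex_ball 0 1).isPreconnected
        isOpen_ball hdiff (mem_ball_self one_pos) hmax
    have : deriv F 0 = 0 := by
      have hev : F =ᶠ[nhds 0] Function.const ℂ (F 0) := by
        apply Filter.eventuallyEq_of_mem (isOpen_ball.mem_nhds (mem_ball_self one_pos))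
        exact hcon
      rw [hev.deriv_eq]
      exact deriv_const _ _
    rw [← hderiv, this, heq]
    norm_num

lemma rootsum (N : ℕ) (hN : 0 < N) (d : ℕ) :
    ∑ s ∈ Finset.range N, (Complex.exp (2 * Real.pi * Complex.I / N)) ^ (s * d)
      = if N ∣ d then (N : ℂ) else 0 := by
  have hprim : IsPrimitiveRoot (Complex.exp (2 * Real.pi * Complex.I / N)) N :=
    Complex.isPrimitiveRoot_exp N hN.ne'
  set η := Complex.exp (2 * Real.pi * Complex.I / N) with hη
  have hpow : ∀ s, η ^ (s * d) = (η ^ d) ^ s := fun s => by rw [mul_comm, pow_mul]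
  simp_rw [hpow]
  by_cases hd : N ∣ d
  · have h1 : η ^ d = 1 := (hprim.pow_eq_one_iff_dvd d).mpr hd
    simp [h1, hd]
  · have h1 : η ^ d ≠ 1 := fun h => hd ((hprim.pow_eq_one_iff_dvd d).mp h)
    rw [geom_sum_eq h1]
    have h2 : (η ^ d) ^ N = 1 := by
      rw [← pow_mul, mul_comm, pow_mul, hprim.pow_eq_one, one_pow]
    rw [h2]
    simp [hd]

lemma regroup {n : ℕ} (g : (Fin n → ℕ) → ℂ) (S : ℂ) (hg : HasSum g S) :
    HasSum (fun m => ∑ β ∈ (Fintype.piFinset fun _ => Finset.range (m+1)).filter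
      (fun β => ∑ j, β j = m), g β) S := by
  set D : (Fin n → ℕ) → ℕ := fun β => ∑ j, β j with hD
  set A : ℕ → Finset (Fin n → ℕ) := fun m =>
    (Fintype.piFinset fun _ => Finset.range (m+1)).filter (fun β => ∑ j, β j = m) with hA
  have hmem : ∀ m β, β ∈ A m ↔ D β = m := by
    intro m β
    simp only [hA, Finset.mem_filter, Fintype.mem_piFinset, Finset.mem_range, Nat.lt_succ_iff]
    constructor
    · exact fun h => h.2
    · intro h
      refine ⟨fun j => ?_, h⟩
      calc β j ≤ ∑ i, β i := Finset.single_le_sum (fun i _ => Nat.zero_le _) (Finset.mem_univ j)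
        _ = m := h
  haveI : ∀ m, Fintype {β : Fin n → ℕ // D β = m} := fun m =>
    Fintype.ofFinset (A m) (fun β => hmem m β)
  have he : HasSum (g ∘ (Equiv.sigmaFiberEquiv D)) S :=
    (Equiv.hasSum_iff (Equiv.sigmaFiberEquiv D)).mpr hg
  have hfib : ∀ m, HasSum (fun (x : {β : Fin n → ℕ // D β = m}) =>
      (g ∘ (Equiv.sigmaFiberEquiv D)) ⟨m, x⟩) (∑ β ∈ A m, g β) := by
    intro m
    have h1 := hasSum_fintype (fun (x : {β : Fin n → ℕ // D β = m}) => g x.1)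
    convert h1 using 1
    · rfl
    exact (Finset.sum_subtype (A m) (fun β => hmem m β) g)
  exact he.sigma hfib

lemma onevar (c : ℕ → ℂ) (F : ℂ → ℂ) (k : ℕ) (hk : 0 < k)
    (h : ∀ w : ℂ, ‖w‖ < 1 → HasSum (fun m => c m * w ^ m) (F w))
    (hbd : ∀ w : ℂ, ‖w‖ < 1 → ‖F w‖ ≤ 1) :
    ‖c k‖ ≤ 1 - ‖c 0‖ ^ 2 := by
  set η := Complex.exp (2 * Real.pi * Complex.I / k) with hη
  have hηn : ‖η‖ = 1 := by
    rw [hη, Complex.norm_exp]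
    have : (2 * (Real.pi:ℂ) * Complex.I / (k:ℂ)).re = 0 := by
      have : (2 * (Real.pi:ℂ) * Complex.I / (k:ℂ)) = ((2 * Real.pi / k : ℝ) : ℂ) * Complex.I := by
        push_cast; ring
      rw [this]
      simp
    rw [this, Real.exp_zero]
  set G : ℂ → ℂ := fun w => (k:ℂ)⁻¹ * ∑ j ∈ Finset.range k, F (η ^ j * w) with hG
  have hkC : (k:ℂ) ≠ 0 := Nat.cast_ne_zero.mpr hk.ne'
  have hGsum : ∀ w : ℂ, ‖w‖ < 1 →
      HasSum (fun i => c (i * k) * (w ^ k) ^ i) (G w) := by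
    intro w hw
    have hterm : ∀ j ∈ Finset.range k, HasSum (fun m => c m * (η ^ j * w) ^ m) (F (η ^ j * w)) := by
      intro j _
      apply h
      rw [norm_mul, norm_pow, hηn, one_pow, one_mul]
      exact hw
    have hsum1 : HasSum (fun m => (k:ℂ)⁻¹ * ∑ j ∈ Finset.range k, c m * (η ^ j * w) ^ m) (G w) :=
      (hasSum_sum hterm).mul_left _
    have hsum2 : HasSum (fun m => if k ∣ m then c m * w ^ m else 0) (G w) := by
      refine hsum1.congr_fun fun m => ?_
      have : ∑ j ∈ Finset.range k, c m * (η ^ j * w) ^ m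
          = c m * w ^ m * ∑ j ∈ Finset.range k, η ^ (j * m) := by
        rw [Finset.mul_sum]
        congr 1; ext j
        rw [mul_pow, ← pow_mul]
        ring
      rw [this, rootsum k hk m]
      by_cases hd : k ∣ m <;> simp [hd, hkC]
      field_simp
    have hinj : Function.Injective (fun i : ℕ => i * k) := fun i i' hii => by
      exact Nat.eq_of_mul_eq_mul_right hk hii
    have := (Function.Injective.hasSum_iff hinj ?_).mpr hsum2
    · refine this.congr_fun fun i => ?_
      simp only [Function.comp_apply]
      rw [if_pos (dvd_mul_left k i), mul_comm i k, pow_mul]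
    · intro m hm
      have : ¬ k ∣ m := by
        intro ⟨i, hi⟩
        exact hm ⟨i, by rw [hi, mul_comm]⟩
      simp [this]
  -- the function φ
  set φ : ℂ → ℂ := fun u => ∑' i, c (i * k) * u ^ i with hφ
  have hroot : ∀ u : ℂ, ‖u‖ < 1 → ∃ w : ℂ, ‖w‖ < 1 ∧ w ^ k = u := by
    intro u hu
    rcases eq_or_ne u 0 with rfl | hu0
    · exact ⟨0, by simpa using one_pos, by simp [zero_pow hk.ne']⟩
    · refine ⟨Complex.exp (Complex.log u / k), ?_, ?_⟩
      · rw [Complex.norm_exp]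
        have hre : (Complex.log u / k).re = Real.log ‖u‖ / k := by
          have h1 : Complex.log u / (k:ℂ) = (((k:ℝ)⁻¹ : ℝ) : ℂ) * Complex.log u := by
            push_cast; ring
          rw [h1, Complex.re_ofReal_mul, Complex.log_re, inv_mul_eq_div]
        rw [hre]
        have hlog : Real.log ‖u‖ < 0 :=
          Real.log_neg (norm_pos_iff.mpr hu0) hu
        have : Real.log ‖u‖ / k < 0 := div_neg_of_neg_of_pos hlog (by exact_mod_cast hk)
        calc Real.exp _ < Real.exp 0 := Real.exp_lt_exp.mpr this
          _ = 1 := Real.exp_zero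
      · rw [← Complex.exp_nat_mul, mul_div_cancel₀ _ hkC, Complex.exp_log hu0]
  have hφsum : ∀ u : ℂ, ‖u‖ < 1 → HasSum (fun i => c (i * k) * u ^ i) (φ u) ∧ ‖φ u‖ ≤ 1 := by
    intro u hu
    obtain ⟨w, hw, hwk⟩ := hroot u hu
    have h1 : HasSum (fun i => c (i * k) * u ^ i) (G w) := by
      have := hGsum w hw
      rwa [hwk] at this
    have h2 : φ u = G w := h1.tsum_eq
    refine ⟨h2 ▸ h1.tsum_eq ▸ h1, ?_⟩
    rw [h2, hG, norm_mul]
    have : ‖∑ j ∈ Finset.range k, F (η ^ j * w)‖ ≤ k := by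
      calc ‖∑ j ∈ Finset.range k, F (η ^ j * w)‖ ≤ ∑ j ∈ Finset.range k, ‖F (η ^ j * w)‖ :=
        norm_sum_le _ _
      _ ≤ ∑ j ∈ Finset.range k, 1 := by
          apply Finset.sum_le_sum
          intro j _
          apply hbd
          rw [norm_mul, norm_pow, hηn, one_pow, one_mul]; exact hw
      _ = k := by simp
    calc ‖(k:ℂ)⁻¹‖ * ‖∑ j ∈ Finset.range k, F (η ^ j * w)‖
        ≤ ‖(k:ℂ)⁻¹‖ * k := by
          exact mul_le_mul_of_nonneg_left this (norm_nonneg _)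
      _ = 1 := by
          rw [norm_inv, Complex.norm_natCast]
          field_simp
  have := core (fun i => c (i * k)) φ (fun u hu => (hφsum u hu).1) (fun u hu => (hφsum u hu).2)
  simpa using this

lemma norm_exp_unit (N : ℕ) : ‖Complex.exp (2 * Real.pi * Complex.I / N)‖ = 1 := by
  rw [Complex.norm_exp]
  have h : (2 * (Real.pi:ℂ) * Complex.I / (N:ℂ)) = ((2 * Real.pi / N : ℝ) : ℂ) * Complex.I := by
    push_cast; ring
  rw [h]
  simp

theorem coeff_bound_polydisc (n : ℕ) (f : (Fin n → ℂ) → ℂ) (a : (Fin n → ℕ) → ℂ)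
    (hf : ∀ z ∈ Metric.ball (0 : Fin n → ℂ) 1,
      HasSum (fun α : Fin n → ℕ => a α * ∏ j, z j ^ α j) (f z))
    (hb : ∀ z ∈ Metric.ball (0 : Fin n → ℂ) 1, ‖f z‖ ≤ 1)
    (α : Fin n → ℕ) (hα : α ≠ 0) :
    ‖a α‖ ≤ 1 - ‖a 0‖ ^ 2 := by
  classical
  set k := ∑ j, α j with hkdef
  have hk : 0 < k := by
    rcases Nat.eq_zero_or_pos k with h0 | h
    · exfalso
      apply hα
      have hsum : ∑ j, α j = 0 := h0
      funext j
      have := Finset.sum_eq_zero_iff.mp hsum j (Finset.mem_univ j)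
      simpa using this
    · exact h
  set N := k + 1 with hN
  set ω := Complex.exp (2 * Real.pi * Complex.I / N) with hω
  have hωn : ‖ω‖ = 1 := norm_exp_unit N
  set A : ℕ → Finset (Fin n → ℕ) := fun m =>
    (Fintype.piFinset fun _ => Finset.range (m+1)).filter (fun β => ∑ j, β j = m) with hA
  set cz : (Fin n → ℂ) → ℕ → ℂ := fun ζ m => ∑ β ∈ A m, a β * ∏ j, ζ j ^ β j with hcz
  have hball : ∀ (w : ℂ) (ζ : Fin n → ℂ), ‖w‖ < 1 → (∀ j, ‖ζ j‖ = 1) →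
      (fun j => w * ζ j) ∈ Metric.ball (0 : Fin n → ℂ) 1 := by
    intro w ζ hw hζ
    rw [mem_ball_zero_iff, pi_norm_lt_iff one_pos]
    intro j
    rw [norm_mul, hζ j, mul_one]
    exact hw
  have hslice : ∀ ζ : Fin n → ℂ, (∀ j, ‖ζ j‖ = 1) → ‖cz ζ k‖ ≤ 1 - ‖a 0‖ ^ 2 := by
    intro ζ hζ
    have h1 : ∀ w : ℂ, ‖w‖ < 1 →
        HasSum (fun m => cz ζ m * w ^ m) (f (fun j => w * ζ j)) := by
      intro w hw
      have hr := regroup (fun β => a β * ∏ j, (w * ζ j) ^ β j) _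
        (hf _ (hball w ζ hw hζ))
      refine hr.congr_fun fun m => ?_
      have hterm : ∀ β ∈ A m, a β * ∏ j, (w * ζ j) ^ β j
          = (a β * ∏ j, ζ j ^ β j) * w ^ m := by
        intro β hβ
        have hdeg : ∑ j, β j = m := (Finset.mem_filter.mp hβ).2
        rw [← hdeg]
        simp_rw [mul_pow]
        rw [Finset.prod_mul_distrib, Finset.prod_pow_eq_pow_sum]
        ring
      rw [hcz]
      dsimp only
      rw [Finset.sum_mul]
      exact (Finset.sum_congr rfl hterm).symm
    have h2 : ∀ w : ℂ, ‖w‖ < 1 → ‖f (fun j => w * ζ j)‖ ≤ 1 := fun w hw =>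
      hb _ (hball w ζ hw hζ)
    have h3 := onevar (cz ζ) _ k hk h1 h2
    have hcz0 : cz ζ 0 = a 0 := by
      have hA0 : A 0 = {(0 : Fin n → ℕ)} := by
        ext β
        simp only [hA, Finset.mem_filter, Fintype.mem_piFinset, Finset.mem_range,
          Nat.lt_one_iff, Finset.mem_singleton]
        constructor
        · intro h
          funext j
          have h1 := h.1 j
          simp only [Pi.zero_apply]
          omega
        · intro h
          subst h
          simp
      rw [hcz]
      dsimp only
      rw [hA0, Finset.sum_singleton]
      simp
    rwa [hcz0] at h3
  -- α ∈ A k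
  have hαle : ∀ j, α j ≤ k := fun j =>
    Finset.single_le_sum (fun i _ => Nat.zero_le _) (Finset.mem_univ j)
  have hαA : α ∈ A k := by
    rw [hA]
    refine Finset.mem_filter.mpr ⟨Fintype.mem_piFinset.mpr fun j => ?_, rfl⟩
    exact Finset.mem_range.mpr (Nat.lt_succ_of_le (hαle j))
  -- divisibility criterion
  have hdvd : ∀ x y : ℕ, x ≤ k → y ≤ k → (N ∣ x * (N-1) + y ↔ x = y) := by
    intro x y hx hy
    haveI : NeZero N := ⟨by omega⟩
    constructor
    · intro hdd
      have hz : ((x * (N - 1) + y : ℕ) : ZMod N) = 0 :=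
        (ZMod.natCast_eq_zero_iff _ _).mpr hdd
      rw [Nat.cast_add, Nat.cast_mul] at hz
      have hN1' : ((N - 1 : ℕ) : ZMod N) = -1 := by
        have h3 : N - 1 + 1 = N := by omega
        have h2 : ((N - 1 : ℕ) : ZMod N) + 1 = 0 := by
          calc ((N - 1 : ℕ) : ZMod N) + 1 = ((N - 1 + 1 : ℕ) : ZMod N) := by push_cast; ring
            _ = 0 := by rw [h3, ZMod.natCast_self]
        exact eq_neg_of_add_eq_zero_left h2
      rw [hN1'] at hz
      have hxy : ((y:ℕ) : ZMod N) = ((x:ℕ) : ZMod N) := by linear_combination hz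
      have := congrArg ZMod.val hxy
      rw [ZMod.val_cast_of_lt (by omega), ZMod.val_cast_of_lt (by omega)] at this
      omega
    · rintro rfl
      refine ⟨x, ?_⟩
      have h3 : N - 1 + 1 = N := by omega
      calc x * (N - 1) + x = x * (N - 1 + 1) := (Nat.mul_succ x (N-1)).symm
        _ = x * N := by rw [h3]
        _ = N * x := mul_comm _ _
  -- averaging identity
  set T := Fintype.piFinset (fun _ : Fin n => Finset.range N) with hT
  have havg : ∑ t ∈ T, (∏ j, ω ^ (t j * (α j * (N-1)))) * cz (fun j => ω ^ t j) k
      = (N:ℂ) ^ n * a α := by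
    calc ∑ t ∈ T, (∏ j, ω ^ (t j * (α j * (N-1)))) * cz (fun j => ω ^ t j) k
        = ∑ t ∈ T, ∑ β ∈ A k, a β * ∏ j, ω ^ (t j * (α j * (N-1) + β j)) := by
          refine Finset.sum_congr rfl fun t _ => ?_
          rw [hcz]
          dsimp only
          rw [Finset.mul_sum]
          refine Finset.sum_congr rfl fun β _ => ?_
          rw [mul_comm (∏ j, ω ^ (t j * (α j * (N-1)))) _, mul_assoc,
            ← Finset.prod_mul_distrib]
          congr 1
          refine Finset.prod_congr rfl fun j _ => ?_
          rw [← pow_mul, ← pow_add]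
          congr 1
          ring
      _ = ∑ β ∈ A k, a β * ∑ t ∈ T, ∏ j, ω ^ (t j * (α j * (N-1) + β j)) := by
          rw [Finset.sum_comm]
          refine Finset.sum_congr rfl fun β _ => ?_
          rw [Finset.mul_sum]
      _ = ∑ β ∈ A k, a β * ∏ j, ∑ s ∈ Finset.range N, ω ^ (s * (α j * (N-1) + β j)) := by
          refine Finset.sum_congr rfl fun β _ => ?_
          congr 1
          rw [Finset.prod_univ_sum]
      _ = ∑ β ∈ A k, a β * ∏ j, (if α j = β j then (N:ℂ) else 0) := by
          refine Finset.sum_congr rfl fun β hβ => ?_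
          congr 1
          refine Finset.prod_congr rfl fun j _ => ?_
          rw [rootsum N (by omega) _]
          have hβle : β j ≤ k := by
            have := (Finset.mem_filter.mp hβ).1
            have := Fintype.mem_piFinset.mp this j
            rw [Finset.mem_range] at this
            omega
          rw [if_congr (hdvd (α j) (β j) (hαle j) hβle) rfl rfl]
      _ = (N:ℂ) ^ n * a α := by
          rw [Finset.sum_eq_single α]
          · simp [mul_comm]
          · intro β _ hne
            have : ∃ j, α j ≠ β j := by
              by_contra hcon
              push_neg at hcon
              exact hne (funext fun j => hcon j : α = β).symm
            obtain ⟨j, hj⟩ := this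
            have hz : (if α j = β j then (N:ℂ) else 0) = 0 := if_neg hj
            rw [Finset.prod_eq_zero (Finset.mem_univ j) hz, mul_zero]
          · intro habs
            exact absurd hαA habs
  -- norm estimate
  have hpos : (0:ℝ) < (N:ℝ) ^ n := by positivity
  have hnorm : (N:ℝ) ^ n * ‖a α‖ ≤ (N:ℝ) ^ n * (1 - ‖a 0‖ ^ 2) := by
    calc (N:ℝ) ^ n * ‖a α‖ = ‖(N:ℂ) ^ n * a α‖ := by
          rw [norm_mul, norm_pow, Complex.norm_natCast]
      _ = ‖∑ t ∈ T, (∏ j, ω ^ (t j * (α j * (N-1)))) * cz (fun j => ω ^ t j) k‖ := by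
          rw [havg]
      _ ≤ ∑ t ∈ T, ‖(∏ j, ω ^ (t j * (α j * (N-1)))) * cz (fun j => ω ^ t j) k‖ :=
          norm_sum_le _ _
      _ ≤ ∑ t ∈ T, (1 - ‖a 0‖ ^ 2) := by
          refine Finset.sum_le_sum fun t _ => ?_
          rw [norm_mul]
          have h1 : ‖∏ j, ω ^ (t j * (α j * (N-1)))‖ = 1 := by
            rw [norm_prod]
            refine Finset.prod_eq_one fun j _ => ?_
            rw [norm_pow, hωn, one_pow]
          rw [h1, one_mul]
          exact hslice _ fun j => by rw [norm_pow, hωn, one_pow]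
      _ = (N:ℝ) ^ n * (1 - ‖a 0‖ ^ 2) := by
          rw [Finset.sum_const, nsmul_eq_mul]
          congr 1
          rw [hT, Fintype.card_piFinset]
          simp
  exact le_of_mul_le_mul_left hnorm hpos
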